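/- There exists a constant C such that for all integers n ≥ 0 and all t > 0, the coefficient a_n(t) := Σ_{k≥0} α_{n+2k}(t)/(M−1)^k satisfies |a_n(t)| ≤ C t^n/n!, provided M ≥ 3. -/

import Mathlib

open scoped Real

/-- Chebyshev transform coefficient of `ξ ↦ e^{-itξ}`. -/
noncomputable def chebAlpha (k : ℕ) (t : ℝ) : ℂ :=
  (2 / (π : ℂ)) * ∫ ξ in (-1:ℝ)..1,
    (Real.sqrt (1 - ξ ^ 2) : ℂ) * Complex.exp (-Complex.I * t * ξ) *
      (Polynomial.Chebyshev.U ℂ (k : ℤ)).eval (ξ : ℂ)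

/-- `a_n(t) = Σ_{k≥0} α_{n+2k}(t)/(M−1)^k`. -/
noncomputable def aCoeff (M : ℕ) (n : ℕ) (t : ℝ) : ℂ :=
  ∑' k : ℕ, chebAlpha (n + 2 * k) t / ((M : ℂ) - 1) ^ k

open Complex Finset

lemma exp_taylor_aux : ∀ (n : ℕ) (x : ℝ), 0 ≤ x →
    ‖Complex.exp (x * I) - ∑ m ∈ Finset.range n, ((x:ℂ) * I) ^ m / m.factorial‖
      ≤ x ^ n / n.factorial := by
  intro n
  induction n with
  | zero =>
    intro x _
    simp [Complex.norm_exp_ofReal_mul_I]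
  | succ n ih =>
    intro x hx
    have hderiv : ∀ s : ℝ, HasDerivAt
        (fun y : ℝ => Complex.exp (y * I) - ∑ m ∈ Finset.range (n+1), ((y:ℂ) * I) ^ m / m.factorial)
        (I * (Complex.exp (s * I) - ∑ m ∈ Finset.range n, ((s:ℂ) * I) ^ m / m.factorial)) s := by
      intro s
      have hinner : HasDerivAt (fun w : ℂ => w * I) I (s:ℂ) := by
        simpa using (hasDerivAt_id ((s:ℂ))).mul_const I
      have h1 : HasDerivAt (fun w : ℂ => Complex.exp (w * I)) (Complex.exp ((s:ℂ) * I) * I) (s:ℂ) := by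
        exact (Complex.hasDerivAt_exp ((s:ℂ) * I)).comp (s:ℂ) hinner
      have h2 : HasDerivAt (fun y : ℝ => Complex.exp (y * I)) (Complex.exp ((s:ℂ) * I) * I) s :=
        h1.comp_ofReal
      have h3 : ∀ m : ℕ, HasDerivAt (fun y : ℝ => ((y:ℂ) * I) ^ m / m.factorial)
          ((m : ℂ) * ((s:ℂ) * I) ^ (m - 1) * (1 * I) / m.factorial) s := by
        intro m
        exact ((((hasDerivAt_id ((s:ℂ))).mul_const I).pow m).div_const _).comp_ofReal
      have h4 := HasDerivAt.fun_sum (fun m _ => h3 m) (u := Finset.range (n+1))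
      have h5 := h2.sub h4
      convert h5 using 1
      case e'_4 => rfl
      case e'_8 => rfl
      rw [Finset.sum_range_succ']
      have hre : ∀ m : ℕ, ((m+1 : ℕ) : ℂ) * ((s:ℂ) * I) ^ (m + 1 - 1) * (1 * I) / ((m+1).factorial)
          = I * (((s:ℂ) * I) ^ m / m.factorial) := by
        intro m
        rw [Nat.factorial_succ]
        push_cast
        have h0 : ((m:ℂ) + 1) ≠ 0 := Nat.cast_add_one_ne_zero m
        have h0' : (m.factorial : ℂ) ≠ 0 := by exact_mod_cast Nat.factorial_ne_zero m
        field_simp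
      simp only [hre]
      rw [mul_sub, Finset.mul_sum]
      simp
      ring
    have hcont : Continuous (fun s : ℝ =>
        I * (Complex.exp (s * I) - ∑ m ∈ Finset.range n, ((s:ℂ) * I) ^ m / m.factorial)) := by
      fun_prop
    have hint := intervalIntegral.integral_eq_sub_of_hasDerivAt
      (fun s _ => hderiv s) (hcont.intervalIntegrable 0 x)
    have hzero : Complex.exp ((0:ℝ) * I) - ∑ m ∈ Finset.range (n+1), (((0:ℝ):ℂ) * I) ^ m / m.factorial = 0 := by
      simp [Finset.sum_range_succ']
    rw [hzero, sub_zero] at hint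
    rw [← hint]
    calc ‖∫ s in (0:ℝ)..x, I * (Complex.exp (s * I) - ∑ m ∈ Finset.range n, ((s:ℂ) * I) ^ m / m.factorial)‖
        ≤ |∫ s in (0:ℝ)..x, s ^ n / (n.factorial:ℝ)| := by
          apply intervalIntegral.norm_integral_le_abs_of_norm_le _
            ((by fun_prop : Continuous fun s:ℝ => s ^ n / (n.factorial:ℝ)).intervalIntegrable 0 x)
          filter_upwards [MeasureTheory.ae_restrict_mem measurableSet_uIoc] with s hs
          rw [Set.uIoc_of_le hx] at hs
          have h0s : 0 ≤ s := le_of_lt hs.1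
          rw [norm_mul, Complex.norm_I, one_mul]
          exact ih s h0s
      _ = x ^ (n+1) / (n+1).factorial := by
          rw [intervalIntegral.integral_div, integral_pow]
          simp only [ne_eq, zero_pow (Nat.succ_ne_zero n), sub_zero]
          rw [_root_.abs_of_nonneg (by positivity), Nat.factorial_succ]
          have h0' : ((n.factorial:ℝ)) ≠ 0 := by exact_mod_cast Nat.factorial_ne_zero n
          push_cast
          field_simp
          try ring

lemma exp_taylor (n : ℕ) (x : ℝ) :
    ‖Complex.exp (x * I) - ∑ m ∈ Finset.range n, ((x:ℂ) * I) ^ m / m.factorial‖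
      ≤ |x| ^ n / n.factorial := by
  rcases le_total 0 x with hx | hx
  · rw [_root_.abs_of_nonneg hx]; exact exp_taylor_aux n x hx
  · have key : Complex.exp (x * I) - ∑ m ∈ Finset.range n, ((x:ℂ) * I) ^ m / m.factorial
        = starRingEnd ℂ (Complex.exp (((-x:ℝ):ℂ) * I) - ∑ m ∈ Finset.range n, (((-x:ℝ):ℂ) * I) ^ m / m.factorial) := by
      rw [map_sub, map_sum]
      congr 1
      · rw [← Complex.exp_conj]
        congr 1
        simp [map_mul, map_neg, Complex.conj_ofReal, Complex.conj_I]
      · refine Finset.sum_congr rfl fun m _ => ?_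
        rw [map_div₀, map_pow, map_mul, Complex.conj_ofReal, Complex.conj_I, map_natCast]
        push_cast; ring
    rw [key, RCLike.norm_conj, ← abs_neg x, _root_.abs_of_nonneg (neg_nonneg.2 hx)]
    exact exp_taylor_aux n (-x) (neg_nonneg.2 hx)

/-- `∫_0^π cos(kθ) cos^m θ dθ = 0` whenever `m < k`. -/

lemma cos_orth : ∀ (m : ℕ) (k : ℕ), m < k →
    (∫ θ in (0:ℝ)..Real.pi, Real.cos (k * θ) * (Real.cos θ) ^ m) = 0 := by
  intro m
  induction m with
  | zero =>
    intro k hk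
    have hk0 : (k:ℝ) ≠ 0 := Nat.cast_ne_zero.mpr (by omega)
    simp only [pow_zero, mul_one]
    have := intervalIntegral.integral_comp_mul_left (fun x => Real.cos x) hk0 (a := 0) (b := Real.pi)
    rw [this]
    simp [Real.sin_nat_mul_pi]
  | succ m ih =>
    intro k hk
    have hid : ∀ θ : ℝ, Real.cos (k * θ) * (Real.cos θ) ^ (m+1)
        = 1/2 * (Real.cos (((k+1:ℕ):ℝ) * θ) * (Real.cos θ) ^ m)
          + 1/2 * (Real.cos (((k-1:ℕ):ℝ) * θ) * (Real.cos θ) ^ m) := by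
      intro θ
      have hcast : ((k-1:ℕ):ℝ) = (k:ℝ) - 1 := by
        push_cast [Nat.cast_sub (by omega : 1 ≤ k)]; ring
      have hc := Real.cos_add_cos (((k:ℝ)+1) * θ) (((k:ℝ)-1) * θ)
      rw [show (((k:ℝ)+1) * θ + ((k:ℝ)-1) * θ) / 2 = k * θ by ring,
        show (((k:ℝ)+1) * θ - ((k:ℝ)-1) * θ) / 2 = θ by ring] at hc
      rw [hcast]
      push_cast
      linear_combination (-Real.cos θ ^ m / 2) * hc
    rw [intervalIntegral.integral_congr (fun θ _ => hid θ)]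
    rw [intervalIntegral.integral_add (by apply Continuous.intervalIntegrable; fun_prop)
      (by apply Continuous.intervalIntegrable; fun_prop)]
    rw [intervalIntegral.integral_const_mul, intervalIntegral.integral_const_mul]
    rw [ih (k+1) (by omega), ih (k-1) (by omega)]
    ring

/-- Orthogonality of `sin((n+1)θ) sin θ` against `cos^m θ` for `m < n`. -/

lemma sin_orth (n m : ℕ) (h : m < n) :
    (∫ θ in (0:ℝ)..Real.pi, Real.sin ((n+1) * θ) * Real.sin θ * (Real.cos θ) ^ m) = 0 := by
  have hid : ∀ θ : ℝ, Real.sin ((n+1) * θ) * Real.sin θ * (Real.cos θ) ^ m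
      = 1/2 * (Real.cos ((n:ℝ) * θ) * (Real.cos θ) ^ m)
        - 1/2 * (Real.cos (((n+2:ℕ):ℝ) * θ) * (Real.cos θ) ^ m) := by
    intro θ
    have hc := Real.cos_sub_cos ((n:ℝ) * θ) (((n:ℝ)+2) * θ)
    rw [show ((n:ℝ) * θ + ((n:ℝ)+2) * θ) / 2 = ((n:ℝ)+1) * θ by ring,
      show ((n:ℝ) * θ - ((n:ℝ)+2) * θ) / 2 = -θ by ring, Real.sin_neg] at hc
    push_cast
    linear_combination (-Real.cos θ ^ m / 2) * hc
  rw [intervalIntegral.integral_congr (fun θ _ => hid θ)]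
  rw [intervalIntegral.integral_sub (by apply Continuous.intervalIntegrable; fun_prop)
    (by apply Continuous.intervalIntegrable; fun_prop)]
  rw [intervalIntegral.integral_const_mul, intervalIntegral.integral_const_mul]
  rw [cos_orth m n h, cos_orth m (n+2) (by omega)]
  ring

lemma chebAlpha_eq (n : ℕ) (t : ℝ) :
    chebAlpha n t = (2 / (π : ℂ)) * ∫ θ in (0:ℝ)..π,
      (Real.sin θ : ℂ) * (Real.sin ((n+1) * θ) : ℂ) * Complex.exp (-Complex.I * t * Real.cos θ) := by
  have hg : Continuous (fun ξ : ℝ => (Real.sqrt (1 - ξ ^ 2) : ℂ) * Complex.exp (-Complex.I * t * ξ) *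
      (Polynomial.Chebyshev.U ℂ (n : ℤ)).eval (ξ : ℂ)) := by
    apply Continuous.mul
    apply Continuous.mul
    · exact Complex.continuous_ofReal.comp ((Real.continuous_sqrt).comp (by fun_prop))
    · fun_prop
    · exact (Polynomial.Chebyshev.U ℂ (n : ℤ)).continuous_aeval.comp Complex.continuous_ofReal
  have hsub := intervalIntegral.integral_comp_smul_deriv
    (f := fun θ : ℝ => Real.cos θ) (f' := fun θ : ℝ => -Real.sin θ)
    (a := π) (b := 0)
    (fun x _ => (Real.hasDerivAt_cos x)) (Continuous.continuousOn (by fun_prop)) hg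
  simp only [Function.comp, Real.cos_pi, Real.cos_zero] at hsub
  unfold chebAlpha
  rw [← hsub, intervalIntegral.integral_symm]
  congr 1
  rw [← intervalIntegral.integral_neg]
  apply intervalIntegral.integral_congr
  intro θ hθ
  rw [Set.uIcc_of_le Real.pi_pos.le] at hθ
  have hsin : 0 ≤ Real.sin θ := Real.sin_nonneg_of_nonneg_of_le_pi hθ.1 hθ.2
  have h1 : Real.sqrt (1 - Real.cos θ ^ 2) = Real.sin θ := by
    rw [show 1 - Real.cos θ ^ 2 = Real.sin θ ^ 2 by
      have := Real.sin_sq_add_cos_sq θ; linarith]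
    exact Real.sqrt_sq hsin
  have h2 : (Polynomial.Chebyshev.U ℂ (n : ℤ)).eval ((Real.cos θ : ℝ) : ℂ) * (Real.sin θ : ℂ)
      = (Real.sin ((n+1) * θ) : ℂ) := by
    have := Polynomial.Chebyshev.U_complex_cos (θ : ℂ) (n : ℤ)
    rw [← Complex.ofReal_cos, ← Complex.ofReal_sin] at this
    rw [this, Complex.ofReal_sin]
    push_cast
    ring_nf
  simp only [Function.comp, h1]
  rw [← h2]
  simp only [Complex.real_smul, Complex.ofReal_neg]
  push_cast
  ring

lemma exp_eq (t c : ℝ) : Complex.exp (-Complex.I * t * c) = Complex.exp ((-(t*c) : ℝ) * I) := by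
  congr 1; push_cast; ring

lemma norm_exp_eq (t c : ℝ) : ‖Complex.exp (-Complex.I * t * c)‖ = 1 := by
  rw [exp_eq, Complex.norm_exp_ofReal_mul_I]

/-- uniform bound -/

lemma chebAlpha_le_two (n : ℕ) (t : ℝ) : ‖chebAlpha n t‖ ≤ 2 := by
  rw [chebAlpha_eq]
  rw [norm_mul]
  have h1 : ‖(2 / (π:ℂ))‖ = 2 / π := by
    rw [norm_div]
    simp [Complex.norm_real, _root_.abs_of_nonneg Real.pi_pos.le]
  rw [h1]
  have h2 : ‖∫ θ in (0:ℝ)..π,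
      (Real.sin θ : ℂ) * (Real.sin ((n+1) * θ) : ℂ) * Complex.exp (-Complex.I * t * Real.cos θ)‖
      ≤ 1 * |π - 0| := by
    apply intervalIntegral.norm_integral_le_of_norm_le_const
    intro θ _
    rw [norm_mul, norm_mul, norm_exp_eq, mul_one, Complex.norm_real, Complex.norm_real,
      Real.norm_eq_abs, Real.norm_eq_abs]
    calc |Real.sin θ| * |Real.sin ((n+1) * θ)| ≤ 1 * 1 :=
      mul_le_mul (Real.abs_sin_le_one θ) (Real.abs_sin_le_one _) (abs_nonneg _) zero_le_one
    _ = 1 := by norm_num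
  rw [one_mul, sub_zero, _root_.abs_of_nonneg Real.pi_pos.le] at h2
  calc 2 / π * ‖_‖ ≤ 2 / π * π := by
        apply mul_le_mul_of_nonneg_left h2 (by positivity)
    _ = 2 := by field_simp

/-- factorial bound -/

lemma chebAlpha_le_fact (n : ℕ) (t : ℝ) (ht : 0 ≤ t) :
    ‖chebAlpha n t‖ ≤ 2 * t ^ n / n.factorial := by
  rw [chebAlpha_eq, norm_mul]
  have h1 : ‖(2 / (π:ℂ))‖ = 2 / π := by
    rw [norm_div]
    simp [Complex.norm_real, _root_.abs_of_nonneg Real.pi_pos.le]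
  rw [h1]
  -- subtract the Taylor polynomial, which integrates to zero against the weight
  set P : ℝ → ℂ := fun θ => ∑ m ∈ Finset.range n, (((-(t * Real.cos θ):ℝ) : ℂ) * I) ^ m / m.factorial with hP
  have hzero : (∫ θ in (0:ℝ)..π, (Real.sin θ : ℂ) * (Real.sin ((n+1) * θ) : ℂ) * P θ) = 0 := by
    have : ∀ θ : ℝ, (Real.sin θ : ℂ) * (Real.sin ((n+1) * θ) : ℂ) * P θ
        = ∑ m ∈ Finset.range n, ((-(t:ℂ)) * I) ^ m / m.factorial *
            ((Real.sin ((n+1) * θ) * Real.sin θ * (Real.cos θ) ^ m : ℝ) : ℂ) := by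
      intro θ
      rw [hP, Finset.mul_sum]
      apply Finset.sum_congr rfl
      intro m _
      push_cast
      ring
    rw [intervalIntegral.integral_congr (fun θ _ => this θ)]
    rw [intervalIntegral.integral_finset_sum]
    · apply Finset.sum_eq_zero
      intro m hm
      rw [intervalIntegral.integral_const_mul, intervalIntegral.integral_ofReal,
        sin_orth n m (Finset.mem_range.mp hm)]
      simp
    · intro m _
      apply Continuous.intervalIntegrable
      fun_prop
  have hsplit : (∫ θ in (0:ℝ)..π,
      (Real.sin θ : ℂ) * (Real.sin ((n+1) * θ) : ℂ) * Complex.exp (-Complex.I * t * Real.cos θ))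
      = ∫ θ in (0:ℝ)..π, (Real.sin θ : ℂ) * (Real.sin ((n+1) * θ) : ℂ) *
          (Complex.exp (-Complex.I * t * Real.cos θ) - P θ) := by
    rw [show (fun θ : ℝ => (Real.sin θ : ℂ) * (Real.sin ((n+1) * θ) : ℂ) *
          (Complex.exp (-Complex.I * t * Real.cos θ) - P θ))
        = fun θ : ℝ => (Real.sin θ : ℂ) * (Real.sin ((n+1) * θ) : ℂ) *
            Complex.exp (-Complex.I * t * Real.cos θ)
          - (Real.sin θ : ℂ) * (Real.sin ((n+1) * θ) : ℂ) * P θ by funext θ; ring]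
    rw [intervalIntegral.integral_sub (by apply Continuous.intervalIntegrable; fun_prop)
      (by apply Continuous.intervalIntegrable; rw [hP]; fun_prop), hzero, sub_zero]
  rw [hsplit]
  have hbound : ‖∫ θ in (0:ℝ)..π, (Real.sin θ : ℂ) * (Real.sin ((n+1) * θ) : ℂ) *
      (Complex.exp (-Complex.I * t * Real.cos θ) - P θ)‖ ≤ (t ^ n / n.factorial) * |π - 0| := by
    apply intervalIntegral.norm_integral_le_of_norm_le_const
    intro θ _
    rw [norm_mul, norm_mul]
    have e1 : ‖((Real.sin θ : ℝ) : ℂ)‖ ≤ 1 := by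
      rw [Complex.norm_real, Real.norm_eq_abs]; exact Real.abs_sin_le_one θ
    have e2 : ‖((Real.sin ((n+1) * θ) : ℝ) : ℂ)‖ ≤ 1 := by
      rw [Complex.norm_real, Real.norm_eq_abs]; exact Real.abs_sin_le_one _
    have e3 : ‖Complex.exp (-Complex.I * t * Real.cos θ) - P θ‖ ≤ t ^ n / n.factorial := by
      rw [exp_eq, hP]
      refine le_trans (exp_taylor n (-(t * Real.cos θ))) ?_
      have hx : |(-(t * Real.cos θ))| ≤ t := by
        rw [abs_neg, abs_mul, _root_.abs_of_nonneg ht]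
        nlinarith [Real.abs_cos_le_one θ]
      have hpow : |(-(t * Real.cos θ))| ^ n ≤ t ^ n := pow_le_pow_left₀ (abs_nonneg _) hx n
      have hfact : (0:ℝ) < n.factorial := by positivity
      exact (div_le_div_iff_of_pos_right hfact).mpr hpow
    calc ‖(Real.sin θ:ℂ)‖ * ‖(Real.sin ((n+1)*θ):ℂ)‖ * ‖Complex.exp (-Complex.I * t * Real.cos θ) - P θ‖
        ≤ 1 * 1 * (t ^ n / n.factorial) := by
          apply mul_le_mul (mul_le_mul e1 e2 (norm_nonneg _) zero_le_one) e3 (norm_nonneg _) (by norm_num)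
      _ = t ^ n / n.factorial := by ring
  rw [sub_zero, _root_.abs_of_nonneg Real.pi_pos.le] at hbound
  calc 2 / π * ‖_‖ ≤ 2 / π * (t ^ n / n.factorial * π) := by
        apply mul_le_mul_of_nonneg_left hbound (by positivity)
    _ = 2 * t ^ n / n.factorial := by field_simp

lemma factorial_le_pow (n : ℕ) : (n.factorial : ℝ) ≤ (((n:ℝ)+1)/2) ^ n := by
  induction n with
  | zero => simp
  | succ n ih =>
    have h2 : (2:ℝ) * (((n:ℝ)+1)/2) ^ (n+1) ≤ (((n:ℝ)+2)/2) ^ (n+1) := by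
      have ha : (-2:ℝ) ≤ 1/((n:ℝ)+1) := le_trans (by norm_num : (-2:ℝ) ≤ 0) (by positivity)
      have hb := one_add_mul_le_pow ha (n+1)
      have hb' : (2:ℝ) ≤ (1 + 1/((n:ℝ)+1)) ^ (n+1) := by
        push_cast at hb
        have he : ((n:ℝ)+1) * (1/((n:ℝ)+1)) = 1 := by field_simp
        linarith
      have hpos : (0:ℝ) < (((n:ℝ)+1)/2) ^ (n+1) := by positivity
      have := mul_le_mul_of_nonneg_right hb' hpos.le
      calc (2:ℝ) * (((n:ℝ)+1)/2) ^ (n+1) ≤ (1 + 1/((n:ℝ)+1)) ^ (n+1) * (((n:ℝ)+1)/2) ^ (n+1) := this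
        _ = (((n:ℝ)+2)/2) ^ (n+1) := by
            rw [← mul_pow]
            congr 1
            field_simp
            ring
    calc ((n+1).factorial : ℝ) = ((n:ℝ)+1) * n.factorial := by
          rw [Nat.factorial_succ]; push_cast; ring
      _ ≤ ((n:ℝ)+1) * (((n:ℝ)+1)/2) ^ n := by
          exact mul_le_mul_of_nonneg_left ih (by positivity)
      _ = 2 * (((n:ℝ)+1)/2) ^ (n+1) := by
          rw [pow_succ]; ring
      _ ≤ (((n:ℝ)+2)/2) ^ (n+1) := h2
      _ = ((((n+1:ℕ):ℝ)+1)/2) ^ (n+1) := by push_cast; ring_nf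

/-- monotone factorial-ratio bound : for `t ≤ n+1` and `n ≤ m`, `t^m/m! ≤ t^n/n!`. -/

lemma pow_div_fact_mono (t : ℝ) (ht : 0 ≤ t) (n : ℕ) (htn : t ≤ (n:ℝ)+1) :
    ∀ m, n ≤ m → t ^ m / (m.factorial : ℝ) ≤ t ^ n / (n.factorial : ℝ) := by
  intro m hm
  induction m, hm using Nat.le_induction with
  | base => exact le_refl _
  | succ m hm ih =>
    calc t ^ (m+1) / ((m+1).factorial : ℝ) = (t / ((m:ℝ)+1)) * (t ^ m / m.factorial) := by
          rw [Nat.factorial_succ, pow_succ]; push_cast; field_simp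
      _ ≤ 1 * (t ^ m / m.factorial) := by
          apply mul_le_mul_of_nonneg_right _ (by positivity)
          rw [div_le_one (by positivity)]
          calc t ≤ (n:ℝ)+1 := htn
            _ ≤ (m:ℝ)+1 := by exact_mod_cast Nat.succ_le_succ hm
      _ = t ^ m / m.factorial := one_mul _
      _ ≤ t ^ n / n.factorial := ih

lemma chebAlpha_key (n m : ℕ) (hnm : n ≤ m) (t : ℝ) (ht : 0 < t) :
    ‖chebAlpha m t‖ ≤ 2 * (t ^ n / n.factorial) := by
  rcases le_or_gt (((n:ℝ)+1)/2) t with h | h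
  · have h1 : (n.factorial : ℝ) ≤ t ^ n := by
      calc (n.factorial:ℝ) ≤ (((n:ℝ)+1)/2)^n := factorial_le_pow n
        _ ≤ t ^ n := pow_le_pow_left₀ (by positivity) h n
    have h2 : (1:ℝ) ≤ t^n / n.factorial := by
      rw [le_div_iff₀ (by positivity)]; linarith
    calc ‖chebAlpha m t‖ ≤ 2 := chebAlpha_le_two m t
      _ ≤ 2 * (t^n/n.factorial) := by linarith
  · have htn : t ≤ (n:ℝ)+1 := by
      have := Nat.cast_nonneg (α := ℝ) n
      linarith
    calc ‖chebAlpha m t‖ ≤ 2 * t^m / m.factorial := chebAlpha_le_fact m t ht.le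
      _ = 2 * (t^m/m.factorial) := by ring
      _ ≤ 2 * (t^n/n.factorial) := by
          have := pow_div_fact_mono t ht.le n htn m hnm
          linarith

/-- There is a constant `C` such that `|a_n(t)| ≤ C t^n / n!` for all `n ≥ 0`,
all `t > 0`, and all `M ≥ 3`. -/
theorem aCoeff_le :
    ∃ C : ℝ, 0 < C ∧ ∀ (M : ℕ), 3 ≤ M → ∀ (n : ℕ) (t : ℝ), 0 < t →
      ‖aCoeff M n t‖ ≤ C * t ^ n / (Nat.factorial n : ℝ) := by
  refine ⟨4, by norm_num, ?_⟩
  intro M hM n t ht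
  have hM2 : (2:ℝ) ≤ (M:ℝ) - 1 := by
    have : (3:ℝ) ≤ (M:ℝ) := by exact_mod_cast hM
    linarith
  have hnorm : ‖(M:ℂ) - 1‖ = (M:ℝ) - 1 := by
    rw [show ((M:ℂ) - 1) = (((M:ℝ) - 1 : ℝ) : ℂ) by push_cast; ring]
    rw [Complex.norm_real, Real.norm_eq_abs, _root_.abs_of_nonneg (by linarith)]
  set B := t^n / (n.factorial : ℝ) with hB
  have hBpos : 0 ≤ B := by rw [hB]; positivity
  have hterm : ∀ k : ℕ, ‖chebAlpha (n + 2*k) t / ((M:ℂ)-1)^k‖ ≤ (2*B) * (1/2:ℝ)^k := by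
    intro k
    rw [norm_div, norm_pow, hnorm]
    have h1 : ‖chebAlpha (n+2*k) t‖ ≤ 2*B := chebAlpha_key n (n+2*k) (by omega) t ht
    have h2 : (2:ℝ)^k ≤ ((M:ℝ)-1)^k := pow_le_pow_left₀ (by norm_num) hM2 k
    calc ‖chebAlpha (n+2*k) t‖ / ((M:ℝ)-1)^k ≤ (2*B) / (2:ℝ)^k :=
        div_le_div₀ (by positivity) h1 (by positivity) h2
      _ = (2*B) * (1/2:ℝ)^k := by rw [div_pow, one_pow]; ring
  have hsum : Summable (fun k : ℕ => (2*B) * (1/2:ℝ)^k) :=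
    (summable_geometric_of_lt_one (by norm_num) (by norm_num)).mul_left _
  have hsumm : Summable (fun k => ‖chebAlpha (n+2*k) t / ((M:ℂ)-1)^k‖) :=
    Summable.of_nonneg_of_le (fun k => norm_nonneg _) hterm hsum
  calc ‖aCoeff M n t‖ ≤ ∑' k, ‖chebAlpha (n+2*k) t / ((M:ℂ)-1)^k‖ :=
        norm_tsum_le_tsum_norm hsumm
    _ ≤ ∑' k : ℕ, (2*B) * (1/2:ℝ)^k := Summable.tsum_le_tsum hterm hsumm hsum
    _ = (2*B) * (1 - 1/2)⁻¹ := by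
        rw [tsum_mul_left, tsum_geometric_of_lt_one (by norm_num) (by norm_num)]
    _ = 4 * t ^ n / (n.factorial : ℝ) := by rw [hB]; norm_num; ring
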